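/- Fix 1 < p ≤ 2 and define h : ℝ → ℝ by h(x) = sign(x)·|x|^{1/(p-1)} (so h(0) = 0). If X, Y, L are real numbers with L ≤ 0 and X ≤ Y + 2L, then h(X) ≤ h(Y) + 2 h(L). -/
import Mathlib


/-- The odd power function `h x = sign x * |x| ^ q` (with `h 0 = 0`). -/
noncomputable def sgnPow (q x : ℝ) : ℝ := Real.sign x * |x| ^ q

lemma sgnPow_of_nonneg {q x : ℝ} (hq : 0 < q) (hx : 0 ≤ x) :
    sgnPow q x = x ^ q := by
  rcases eq_or_lt_of_le hx with h | h
  · simp [sgnPow, ← h, Real.zero_rpow hq.ne']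
  · rw [sgnPow, Real.sign_of_pos h, abs_of_pos h, one_mul]

lemma sgnPow_of_nonpos {q x : ℝ} (hq : 0 < q) (hx : x ≤ 0) :
    sgnPow q x = -(-x) ^ q := by
  rcases eq_or_lt_of_le hx with h | h
  · simp [sgnPow, h, Real.zero_rpow hq.ne']
  · rw [sgnPow, Real.sign_of_neg h, abs_of_neg h, neg_one_mul]

lemma sgnPow_mono {q : ℝ} (hq : 0 < q) : Monotone (sgnPow q) := by
  intro x y hxy
  rcases le_total 0 x with hx | hx
  · rw [sgnPow_of_nonneg hq hx, sgnPow_of_nonneg hq (hx.trans hxy)]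
    exact Real.rpow_le_rpow hx hxy hq.le
  · rcases le_total y 0 with hy | hy
    · rw [sgnPow_of_nonpos hq (hxy.trans hy), sgnPow_of_nonpos hq hy]
      exact neg_le_neg (Real.rpow_le_rpow (by linarith) (by linarith) hq.le)
    · rw [sgnPow_of_nonpos hq hx, sgnPow_of_nonneg hq hy]
      have h1 : (0:ℝ) ≤ (-x) ^ q := Real.rpow_nonneg (by linarith) q
      have h2 : (0:ℝ) ≤ y ^ q := Real.rpow_nonneg hy q
      linarith

/-- Superadditivity of `x ^ q` on nonneg reals for `q ≥ 1`. -/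
lemma rpow_superadd {q a b : ℝ} (hq : 1 ≤ q) (ha : 0 ≤ a) (hb : 0 ≤ b) :
    a ^ q + b ^ q ≤ (a + b) ^ q := by
  lift a to NNReal using ha
  lift b to NNReal using hb
  have := NNReal.add_rpow_le_rpow_add a b hq
  exact_mod_cast this

lemma two_rpow_ge {q : ℝ} (hq : 1 ≤ q) : (2:ℝ) ≤ (2:ℝ) ^ q := by
  calc (2:ℝ) = (2:ℝ) ^ (1:ℝ) := (Real.rpow_one 2).symm
    _ ≤ (2:ℝ) ^ q := Real.rpow_le_rpow_of_exponent_le one_le_two hq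

/-- **Comparison of the normalized `p`-Laplacian values at two points.**
Fix `1 < p ≤ 2` and let `h x = sign x * |x| ^ (1/(p-1))`. If `L ≤ 0` and
`X ≤ Y + 2L`, then `h X ≤ h Y + 2 h L`. -/
theorem sgnPow_two_point_comparison (p : ℝ) (hp1 : 1 < p) (hp2 : p ≤ 2)
    (X Y L : ℝ) (hL : L ≤ 0) (hXY : X ≤ Y + 2 * L) :
    sgnPow (1 / (p - 1)) X ≤ sgnPow (1 / (p - 1)) Y + 2 * sgnPow (1 / (p - 1)) L := by
  set q : ℝ := 1 / (p - 1) with hqdef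
  have hp1' : 0 < p - 1 := by linarith
  have hq1 : 1 ≤ q := by
    rw [hqdef, le_div_iff₀ hp1']; linarith
  have hq0 : 0 < q := lt_of_lt_of_le one_pos hq1
  have hstep : sgnPow q (Y + 2 * L) ≤ sgnPow q Y + 2 * sgnPow q L := by
    have hLpos : 0 ≤ -L := by linarith
    have hLeq : sgnPow q L = -(-L) ^ q := sgnPow_of_nonpos hq0 hL
    have h2L : 2 * (-L) ^ q ≤ (2 * -L) ^ q := by
      rw [Real.mul_rpow (by norm_num) hLpos]
      have := two_rpow_ge hq1
      nlinarith [Real.rpow_nonneg hLpos q]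
    rcases le_total 0 (Y + 2 * L) with hA | hA
    · -- both nonneg
      have hY : 0 ≤ Y := by linarith
      rw [sgnPow_of_nonneg hq0 hA, sgnPow_of_nonneg hq0 hY, hLeq]
      have := rpow_superadd hq1 hA (by linarith : (0:ℝ) ≤ 2 * -L)
      have heq : Y + 2 * L + 2 * -L = Y := by ring
      rw [heq] at this
      linarith
    · rcases le_total Y 0 with hB | hB
      · -- both nonpos
        rw [sgnPow_of_nonpos hq0 hA, sgnPow_of_nonpos hq0 hB, hLeq]
        have := rpow_superadd hq1 (by linarith : (0:ℝ) ≤ -Y) (by linarith : (0:ℝ) ≤ 2 * -L)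
        have heq : -Y + 2 * -L = -(Y + 2 * L) := by ring
        rw [heq] at this
        linarith
      · -- Y ≥ 0 ≥ Y + 2L : use convexity
        rw [sgnPow_of_nonpos hq0 hA, sgnPow_of_nonneg hq0 hB, hLeq]
        -- need: 2 * (-L)^q ≤ Y^q + (-(Y+2L))^q
        have hconv := (convexOn_rpow hq1).2 (Set.mem_Ici.2 hB)
          (Set.mem_Ici.2 (by linarith : (0:ℝ) ≤ -(Y + 2 * L)))
          (by norm_num : (0:ℝ) ≤ (1:ℝ)/2) (by norm_num : (0:ℝ) ≤ (1:ℝ)/2)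
          (by norm_num)
        simp only [smul_eq_mul] at hconv
        have heq : (1:ℝ)/2 * Y + 1/2 * -(Y + 2 * L) = -L := by ring
        rw [heq] at hconv
        nlinarith
  exact le_trans (sgnPow_mono hq0 hXY) hstep
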